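/- The family of functions φ_k(ω) = π^{-1/2} (1 - iω)^{-1} ((1 + iω)/(1 - iω))^k, for k ∈ ℤ, forms a complete orthonormal set (Hilbert basis) in L²(ℝ) with the standard inner product ⟨f,g⟩ = ∫ f*(ω) g(ω) dω. -/

import Mathlib

open MeasureTheory Complex Set

local instance : Fact ((0:ℝ) < 2 * Real.pi) := ⟨by positivity⟩

/-- The functions `φ_k(ω) = π^{-1/2} (1 - iω)^{-1} ((1 + iω)/(1 - iω))^k`. -/
noncomputable def phi (k : ℤ) (ω : ℝ) : ℂ :=
  (Real.pi : ℂ)⁻¹ ^ (1/2 : ℂ) * (1 - I * ω)⁻¹ * ((1 + I * ω) / (1 - I * ω)) ^ k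

noncomputable section PhiAux

/-- the substitution `θ ↦ tan (θ/2)` -/
def tn (θ : ℝ) : ℝ := Real.tan (θ / 2)

/-- its derivative -/
def dtn (θ : ℝ) : ℝ := (1 + Real.tan (θ / 2) ^ 2) / 2

lemma dtn_pos (θ : ℝ) : 0 < dtn θ := by unfold dtn; positivity

lemma two_arctan_mem (ω : ℝ) : 2 * Real.arctan ω ∈ Ioo (-Real.pi) Real.pi := by
  have h1 := Real.arctan_lt_pi_div_two ω
  have h2 := Real.neg_pi_div_two_lt_arctan ω
  constructor <;> [nlinarith; nlinarith]

lemma tn_two_arctan (ω : ℝ) : tn (2 * Real.arctan ω) = ω := by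
  unfold tn; rw [show 2 * Real.arctan ω / 2 = Real.arctan ω by ring, Real.tan_arctan]

lemma arctan_tn {θ : ℝ} (hθ : θ ∈ Ioo (-Real.pi) Real.pi) : 2 * Real.arctan (tn θ) = θ := by
  unfold tn
  rw [Real.arctan_tan (by linarith [hθ.1]) (by linarith [hθ.2])]
  ring

lemma injOn_tn : InjOn tn (Ioo (-Real.pi) Real.pi) := by
  intro a ha b hb hab
  have := congrArg Real.arctan hab
  have h1 := arctan_tn ha
  have h2 := arctan_tn hb
  nlinarith [congrArg (2 * ·) this]

lemma image_tn : tn '' (Ioo (-Real.pi) Real.pi) = univ := by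
  apply eq_univ_of_forall
  intro ω
  exact ⟨2 * Real.arctan ω, two_arctan_mem ω, tn_two_arctan ω⟩

lemma hasDerivAt_tn {θ : ℝ} (hθ : θ ∈ Ioo (-Real.pi) Real.pi) : HasDerivAt tn (dtn θ) θ := by
  have hcos : Real.cos (θ / 2) ≠ 0 := by
    refine (Real.cos_pos_of_mem_Ioo ?_).ne'
    constructor
    · linarith [hθ.1]
    · linarith [hθ.2]
  have h1 : HasDerivAt (fun x : ℝ => x / 2) (1 / 2) θ := by
    simpa using (hasDerivAt_id θ).div_const 2
  have h2 := (Real.hasDerivAt_tan hcos).comp θ h1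
  refine h2.congr_deriv (Eq.symm ?_)
  have h3 : (1 + Real.tan (θ/2)^2)⁻¹ = Real.cos (θ/2)^2 := Real.inv_one_add_tan_sq hcos
  have h4 : (1 + Real.tan (θ/2)^2) ≠ 0 := by positivity
  unfold dtn
  rw [← h3]
  field_simp

end PhiAux

noncomputable section PhiComplex

/-- the Cayley transform value -/
def zf (ω : ℝ) : ℂ := (1 + I * ω) / (1 - I * ω)

lemma one_sub_ne (ω : ℝ) : (1 : ℂ) - I * ω ≠ 0 := by
  intro h
  have := congrArg Complex.re h
  simp at this

lemma one_add_ne (ω : ℝ) : (1 : ℂ) + I * ω ≠ 0 := by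
  intro h
  have := congrArg Complex.re h
  simp at this

lemma normSq_one_sub (ω : ℝ) : Complex.normSq (1 - I * ω) = 1 + ω ^ 2 := by
  simp [Complex.normSq_apply]
  ring

lemma abs_zf (ω : ℝ) : ‖zf ω‖ = 1 := by
  unfold zf
  rw [norm_div]
  have h1 : ‖(1 + I * ω)‖ = ‖(1 - I * ω)‖ := by
    rw [← Complex.norm_conj (1 - I * ω)]
    congr 1
    simp [Complex.ext_iff]
  rw [h1, div_self]
  simp [one_sub_ne ω]

lemma zf_ne (ω : ℝ) : zf ω ≠ 0 := by
  unfold zf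
  exact div_ne_zero (one_add_ne ω) (one_sub_ne ω)

lemma exp_two_arctan (ω : ℝ) : Complex.exp ((2 * Real.arctan ω : ℝ) * I) = zf ω := by
  rw [Complex.exp_mul_I]
  have hpos : (0:ℝ) < 1 + ω ^ 2 := by positivity
  have hs : Real.sqrt (1 + ω ^ 2) ^ 2 = 1 + ω ^ 2 := Real.sq_sqrt hpos.le
  have hcos : Real.cos (2 * Real.arctan ω) = (1 - ω ^ 2) / (1 + ω ^ 2) := by
    rw [Real.cos_two_mul, Real.cos_arctan]
    rw [div_pow, one_pow, hs]
    field_simp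
    ring
  have hsin : Real.sin (2 * Real.arctan ω) = 2 * ω / (1 + ω ^ 2) := by
    rw [Real.sin_two_mul, Real.sin_arctan, Real.cos_arctan]
    field_simp
    rw [hs]
  rw [show Complex.cos ((2 * Real.arctan ω : ℝ) : ℂ) = ((Real.cos (2 * Real.arctan ω) : ℝ) : ℂ) by
        rw [Complex.ofReal_cos],
      show Complex.sin ((2 * Real.arctan ω : ℝ) : ℂ) = ((Real.sin (2 * Real.arctan ω) : ℝ) : ℂ) by
        rw [Complex.ofReal_sin],
      hcos, hsin]
  unfold zf
  have h2 : ((1:ℂ) + (ω:ℂ) ^ 2) ≠ 0 := by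
    have h3 : ((1 + ω ^ 2 : ℝ) : ℂ) ≠ 0 := Complex.ofReal_ne_zero.mpr hpos.ne'
    push_cast at h3
    exact h3
  push_cast
  field_simp [h2, one_sub_ne ω]
  rw [eq_div_iff (by rw [mul_comm]; exact one_sub_ne ω)]
  ring_nf
  simp [Complex.I_sq]
  ring

lemma fourier_eq (n : ℤ) (ω : ℝ) :
    fourier (T := 2 * Real.pi) n ((2 * Real.arctan ω : ℝ) : AddCircle (2 * Real.pi)) = zf ω ^ n := by
  rw [fourier_coe_apply]
  rw [← exp_two_arctan, ← Complex.exp_int_mul]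
  congr 1
  have hπ : (Real.pi : ℂ) ≠ 0 := by exact_mod_cast Real.pi_ne_zero
  field_simp
  push_cast
  ring

end PhiComplex

noncomputable section PhiConst

/-- The normalising constant as a real number. -/
def cpi : ℝ := Real.pi⁻¹ ^ ((1:ℝ)/2)

lemma cpi_pos : 0 < cpi := by
  unfold cpi
  positivity

lemma cpi_sq : cpi * cpi = Real.pi⁻¹ := by
  unfold cpi
  rw [← Real.rpow_add (by positivity)]
  norm_num

lemma phi_const_eq : (Real.pi : ℂ)⁻¹ ^ ((1:ℂ)/2) = (cpi : ℂ) := by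
  unfold cpi
  rw [show ((Real.pi : ℂ))⁻¹ = ((Real.pi⁻¹ : ℝ) : ℂ) by push_cast; ring,
      show ((1:ℂ)/2) = ((1/2 : ℝ) : ℂ) by norm_num,
      ← Complex.ofReal_cpow (by positivity)]

lemma phi_eq (k : ℤ) (ω : ℝ) : phi k ω = (cpi : ℂ) * (1 - I * ω)⁻¹ * zf ω ^ k := by
  unfold phi zf
  rw [phi_const_eq]

lemma norm_sq_phi (k : ℤ) (ω : ℝ) : ‖phi k ω‖ ^ 2 = Real.pi⁻¹ * (1 + ω ^ 2)⁻¹ := by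
  rw [phi_eq]
  rw [norm_mul, norm_mul, norm_zpow, abs_zf, one_zpow, mul_one]
  rw [norm_inv]
  have h1 : ‖(cpi : ℂ)‖ = cpi := by
    rw [Complex.norm_real, Real.norm_of_nonneg cpi_pos.le]
  have h2 : ‖(1 : ℂ) - I * ω‖ ^ 2 = 1 + ω ^ 2 := by
    rw [Complex.sq_norm, normSq_one_sub]
  rw [h1, mul_pow, inv_pow, h2, sq, cpi_sq]

end PhiConst

noncomputable section PhiMeas

lemma continuous_phi (k : ℤ) : Continuous (phi k) := by
  simp only [funext (phi_eq k)]
  apply Continuous.mul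
  · apply continuous_const.mul
    apply Continuous.inv₀
    · exact (continuous_const.sub (continuous_const.mul Complex.continuous_ofReal))
    · exact fun ω => one_sub_ne ω
  · apply Continuous.zpow₀
    · unfold zf
      apply Continuous.div
      · exact (continuous_const.add (continuous_const.mul Complex.continuous_ofReal))
      · exact (continuous_const.sub (continuous_const.mul Complex.continuous_ofReal))
      · exact fun ω => one_sub_ne ω
    · exact fun ω => Or.inl (zf_ne ω)

lemma memLp_phi (k : ℤ) : MemLp (phi k) 2 (volume : Measure ℝ) := by
  rw [memLp_two_iff_integrable_sq_norm (continuous_phi k).aestronglyMeasurable]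
  have : Integrable (fun ω : ℝ => Real.pi⁻¹ * (1 + ω ^ 2)⁻¹) volume :=
    integrable_inv_one_add_sq.const_mul _
  exact this.congr (Filter.Eventually.of_forall fun ω => (norm_sq_phi k ω).symm)

/-- change of variables for Bochner integrals over ℝ -/
lemma cov {E : Type*} [NormedAddCommGroup E] [NormedSpace ℝ E] (g : ℝ → E) :
    ∫ ω : ℝ, g ω = ∫ θ in Ioo (-Real.pi) Real.pi, dtn θ • g (tn θ) := by
  have h := integral_image_eq_integral_abs_deriv_smul (f := tn) (f' := dtn)
    measurableSet_Ioo (fun θ hθ => (hasDerivAt_tn hθ).hasDerivWithinAt) injOn_tn g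
  rw [image_tn, Measure.restrict_univ] at h
  rw [h]
  refine setIntegral_congr_fun measurableSet_Ioo fun θ _ => ?_
  rw [abs_of_pos (dtn_pos θ)]

/-- change of variables for lower integrals over ℝ -/
lemma lcov (g : ℝ → ENNReal) :
    ∫⁻ ω : ℝ, g ω = ∫⁻ θ in Ioo (-Real.pi) Real.pi, ENNReal.ofReal (dtn θ) * g (tn θ) := by
  have h := lintegral_image_eq_lintegral_abs_det_fderiv_mul (volume : Measure ℝ)
    (f := tn) (f' := fun θ => ContinuousLinearMap.smulRight (1 : ℝ →L[ℝ] ℝ) (dtn θ))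
    measurableSet_Ioo (fun θ hθ => (hasDerivAt_tn hθ).hasDerivWithinAt.hasFDerivWithinAt)
    injOn_tn g
  rw [image_tn, Measure.restrict_univ] at h
  rw [h]
  refine lintegral_congr_ae (ae_restrict_of_ae (Filter.Eventually.of_forall fun θ => ?_))
  simp only [ContinuousLinearMap.smulRight_one_eq_toSpanSingleton, ContinuousLinearMap.det_toSpanSingleton, abs_of_pos (dtn_pos θ)]

end PhiMeas

noncomputable section PhiTransfer

lemma conj_phi (n : ℤ) (ω : ℝ) :
    (starRingEnd ℂ) (phi n ω) = (cpi : ℂ) * (1 + I * ω)⁻¹ * zf ω ^ (-n) := by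
  rw [phi_eq, map_mul, map_mul]
  congr 1
  · congr 1
    · rw [Complex.conj_ofReal]
    · rw [map_inv₀]
      congr 1
      simp [Complex.ext_iff]
  · rw [map_zpow₀, ← Complex.inv_eq_conj (abs_zf ω), inv_zpow, ← zpow_neg]

lemma one_add_inv_eq (ω : ℝ) : ((1 + ω ^ 2 : ℝ) : ℂ) * (1 + I * ω)⁻¹ = 1 - I * ω := by
  have h := one_add_ne ω
  field_simp
  ring_nf
  simp [Complex.I_sq]

lemma dtn_eq (θ : ℝ) : dtn θ = (1 + tn θ ^ 2) / 2 := rfl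

lemma key_pointwise (n : ℤ) (w : ℝ → ℂ) {θ : ℝ} (hθ : θ ∈ Ioo (-Real.pi) Real.pi) :
    dtn θ • ((starRingEnd ℂ) (phi n (tn θ)) * w (tn θ)) =
      ((cpi / 2 : ℝ) : ℂ) *
        ((fourier (T := 2 * Real.pi) (-n) ((θ : ℝ) : AddCircle (2 * Real.pi))) *
          ((1 - I * tn θ) * w (tn θ))) := by
  have hf : (fourier (T := 2 * Real.pi) (-n) ((θ : ℝ) : AddCircle (2 * Real.pi)))
      = zf (tn θ) ^ (-n) := by
    conv_lhs => rw [← arctan_tn hθ]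
    exact fourier_eq (-n) (tn θ)
  rw [hf, conj_phi, Complex.real_smul, dtn_eq]
  have h2 : ((1 + tn θ ^ 2 : ℝ) : ℂ) * (1 + I * tn θ)⁻¹ = 1 - I * tn θ := one_add_inv_eq (tn θ)
  push_cast
  push_cast at h2
  calc ((1 + (tn θ:ℂ) ^ 2) / 2) * ((cpi:ℂ) * (1 + I * tn θ)⁻¹ * zf (tn θ) ^ (-n) * w (tn θ))
      = ((cpi:ℂ) / 2) * (zf (tn θ) ^ (-n) * (((1 + (tn θ:ℂ) ^ 2) * (1 + I * tn θ)⁻¹) * w (tn θ))) := by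
        ring
    _ = _ := by rw [h2]

lemma key_transfer (n : ℤ) (w : ℝ → ℂ) :
    ∫ ω : ℝ, (starRingEnd ℂ) (phi n ω) * w ω =
      ((cpi / 2 : ℝ) : ℂ) * ∫ θ in Ioo (-Real.pi) Real.pi,
        (fourier (T := 2 * Real.pi) (-n) ((θ : ℝ) : AddCircle (2 * Real.pi))) *
          ((1 - I * tn θ) * w (tn θ)) := by
  rw [cov (fun ω => (starRingEnd ℂ) (phi n ω) * w ω)]
  rw [show ((cpi / 2 : ℝ) : ℂ) * (∫ θ in Ioo (-Real.pi) Real.pi,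
        (fourier (T := 2 * Real.pi) (-n) ((θ : ℝ) : AddCircle (2 * Real.pi))) *
          ((1 - I * tn θ) * w (tn θ))) = ∫ θ in Ioo (-Real.pi) Real.pi,
        ((cpi / 2 : ℝ) : ℂ) • ((fourier (T := 2 * Real.pi) (-n) ((θ : ℝ) : AddCircle (2 * Real.pi))) *
          ((1 - I * tn θ) * w (tn θ))) from by rw [integral_smul]; rfl]
  refine setIntegral_congr_fun measurableSet_Ioo fun θ hθ => ?_
  rw [key_pointwise n w hθ]
  rfl

end PhiTransfer

noncomputable section PhiOrtho

lemma one_sub_mul_phi (k : ℤ) (ω : ℝ) :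
    (1 - I * ω) * phi k ω = (cpi : ℂ) * zf ω ^ k := by
  rw [phi_eq]
  field_simp [one_sub_ne ω]

lemma integral_fourier_mul (j k : ℤ) :
    (∫ x : AddCircle (2 * Real.pi), fourier (-j) x * fourier k x ∂AddCircle.haarAddCircle) =
      if j = k then 1 else 0 := by
  have h1 := orthonormal_iff_ite.mp (@orthonormal_fourier (2 * Real.pi) _) j k
  rw [MeasureTheory.L2.inner_def] at h1
  rw [← h1]
  apply integral_congr_ae
  filter_upwards [coeFn_fourierLp 2 j, coeFn_fourierLp 2 k] with x hj hk
  rw [hj, hk, RCLike.inner_apply, fourier_neg]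
  ring

lemma phi_orthonormal (j k : ℤ) :
    (∫ ω : ℝ, (starRingEnd ℂ) (phi j ω) * phi k ω) = if j = k then 1 else 0 := by
  rw [key_transfer j (phi k)]
  have hstep : (∫ θ in Ioo (-Real.pi) Real.pi,
      (fourier (T := 2 * Real.pi) (-j) ((θ : ℝ) : AddCircle (2 * Real.pi))) *
        ((1 - I * tn θ) * phi k (tn θ))) =
      (cpi : ℂ) * ∫ θ in Ioo (-Real.pi) Real.pi,
        (fourier (T := 2 * Real.pi) (-j) ((θ : ℝ) : AddCircle (2 * Real.pi))) *
          (fourier (T := 2 * Real.pi) k ((θ : ℝ) : AddCircle (2 * Real.pi))) := by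
    rw [← MeasureTheory.integral_const_mul]
    refine setIntegral_congr_fun measurableSet_Ioo fun θ hθ => ?_
    rw [one_sub_mul_phi]
    have hk : (fourier (T := 2 * Real.pi) k ((θ : ℝ) : AddCircle (2 * Real.pi)))
        = zf (tn θ) ^ k := by
      conv_lhs => rw [← arctan_tn hθ]
      exact fourier_eq k (tn θ)
    rw [hk]
    ring
  rw [hstep]
  have hIoo : (∫ θ in Ioo (-Real.pi) Real.pi,
      (fourier (T := 2 * Real.pi) (-j) ((θ : ℝ) : AddCircle (2 * Real.pi))) *
        (fourier (T := 2 * Real.pi) k ((θ : ℝ) : AddCircle (2 * Real.pi)))) =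
      (2 * Real.pi) • ∫ x : AddCircle (2 * Real.pi), fourier (-j) x * fourier k x ∂AddCircle.haarAddCircle := by
    rw [← integral_Ioc_eq_integral_Ioo]
    have hpre := AddCircle.integral_preimage (2 * Real.pi) (-Real.pi)
      (fun x : AddCircle (2 * Real.pi) => fourier (-j) x * fourier k x)
    rw [show -Real.pi + 2 * Real.pi = Real.pi by ring] at hpre
    rw [hpre, AddCircle.volume_eq_smul_haarAddCircle, integral_smul_measure,
      ENNReal.toReal_ofReal Real.two_pi_pos.le]
  rw [hIoo, integral_fourier_mul]
  have hc : ((cpi / 2 : ℝ) : ℂ) * ((cpi : ℂ) * ((2 * Real.pi) • (if j = k then (1:ℂ) else 0)))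
      = if j = k then 1 else 0 := by
    rw [real_smul]
    have : ((cpi / 2 : ℝ) : ℂ) * ((cpi : ℂ) * (((2 * Real.pi : ℝ) : ℂ) * (if j = k then (1:ℂ) else 0)))
        = (((cpi * cpi * Real.pi : ℝ)) : ℂ) * (if j = k then (1:ℂ) else 0) := by
      push_cast; ring
    rw [this, cpi_sq, inv_mul_cancel₀ Real.pi_ne_zero]
    simp
  exact hc
end PhiOrtho

noncomputable section PhiComplete

lemma measurable_tn : Measurable tn := by
  unfold tn
  have htan : Measurable Real.tan := by
    have h : Real.tan = fun x => Real.sin x / Real.cos x :=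
      funext fun x => Real.tan_eq_sin_div_cos x
    rw [h]
    exact Real.measurable_sin.div Real.measurable_cos
  exact htan.comp (measurable_id.div_const 2)

lemma measurable_liftIoc {h : ℝ → ℂ} (hh : Measurable h) :
    Measurable (AddCircle.liftIoc (2 * Real.pi) (-Real.pi) h) := by
  have h1 := (AddCircle.measurableEquivIoc (2 * Real.pi) (-Real.pi)).measurable
  exact hh.comp (measurable_subtype_coe.comp h1)

lemma phi_complete (f : ℝ → ℂ) (hsm : StronglyMeasurable f)
    (hf : MemLp f 2 (volume : Measure ℝ))
    (hint : ∀ k : ℤ, (∫ ω : ℝ, (starRingEnd ℂ) (phi k ω) * f ω) = 0) :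
    f =ᵐ[volume] 0 := by
  have hfm : Measurable f := hsm.measurable
  set hfun : ℝ → ℂ := fun θ => (1 - I * tn θ) * f (tn θ) with hfun_def
  have hfun_meas : Measurable hfun := by
    apply Measurable.mul
    · exact (measurable_const.sub (measurable_const.mul
        (Complex.measurable_ofReal.comp measurable_tn)))
    · exact hfm.comp measurable_tn
  set G : AddCircle (2 * Real.pi) → ℂ := AddCircle.liftIoc (2 * Real.pi) (-Real.pi) hfun with hG_def
  have hG_meas : Measurable G := measurable_liftIoc hfun_meas
  have hK1 : ∀ θ ∈ Ioc (-Real.pi) Real.pi, G ((θ : ℝ) : AddCircle (2 * Real.pi)) = hfun θ := by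
    intro θ hθ
    apply AddCircle.liftIoc_coe_apply
    rwa [show -Real.pi + 2 * Real.pi = Real.pi by ring]
  -- norm identity
  have hnorm : ∀ θ : ℝ, ‖hfun θ‖ ^ 2 = 2 * (|dtn θ| • ‖f (tn θ)‖ ^ 2) := by
    intro θ
    rw [hfun_def]
    simp only [norm_mul, mul_pow, smul_eq_mul, abs_of_pos (dtn_pos θ)]
    have : ‖(1 : ℂ) - I * (tn θ : ℂ)‖ ^ 2 = 1 + tn θ ^ 2 := by
      rw [Complex.sq_norm, normSq_one_sub]
    rw [this, dtn_eq]
    ring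
  -- integrability on the circle
  have hfsq : Integrable (fun ω => ‖f ω‖ ^ 2) volume :=
    (memLp_two_iff_integrable_sq_norm hsm.aestronglyMeasurable).mp hf
  have hIoo : IntegrableOn (fun θ => ‖hfun θ‖ ^ 2) (Ioo (-Real.pi) Real.pi) volume := by
    have h1 : IntegrableOn (fun ω => ‖f ω‖ ^ 2) (tn '' Ioo (-Real.pi) Real.pi) volume := by
      rw [image_tn]
      exact hfsq.integrableOn
    have h2 := (integrableOn_image_iff_integrableOn_abs_deriv_smul
      (f := tn) (f' := dtn) measurableSet_Ioo
      (fun θ hθ => (hasDerivAt_tn hθ).hasDerivWithinAt) injOn_tn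
      (fun ω => ‖f ω‖ ^ 2)).mp h1
    have h3 : IntegrableOn (fun θ => 2 * (|dtn θ| • ‖f (tn θ)‖ ^ 2))
        (Ioo (-Real.pi) Real.pi) volume := h2.const_mul 2
    exact IntegrableOn.congr_fun h3 (fun θ _ => (hnorm θ).symm) measurableSet_Ioo
  have hIoc : IntegrableOn (fun θ => ‖hfun θ‖ ^ 2) (Ioc (-Real.pi) Real.pi) volume :=
    (integrableOn_Ioc_iff_integrableOn_Ioo (by finiteness)).mpr hIoo
  have hGaesm : AEStronglyMeasurable (fun x => ‖G x‖ ^ 2)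
      (volume : Measure (AddCircle (2 * Real.pi))) :=
    ((hG_meas.norm).pow_const 2).aestronglyMeasurable
  have hGvol : Integrable (fun x => ‖G x‖ ^ 2) (volume : Measure (AddCircle (2 * Real.pi))) := by
    rw [← (AddCircle.measurePreserving_mk (2 * Real.pi) (-Real.pi)).integrable_comp hGaesm]
    rw [show -Real.pi + 2 * Real.pi = Real.pi by ring]
    exact IntegrableOn.congr_fun hIoc (fun θ hθ => by
      simp only [Function.comp_apply]
      rw [hK1 θ hθ]) measurableSet_Ioc
  have hGhaar : Integrable (fun x => ‖G x‖ ^ 2) (AddCircle.haarAddCircle (T := 2 * Real.pi)) := by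
    have hrw : (AddCircle.haarAddCircle (T := 2 * Real.pi)) =
        (ENNReal.ofReal (2 * Real.pi))⁻¹ • (volume : Measure (AddCircle (2 * Real.pi))) := by
      rw [AddCircle.volume_eq_smul_haarAddCircle, smul_smul, ENNReal.inv_mul_cancel, one_smul]
      · simp only [ne_eq, ENNReal.ofReal_eq_zero, not_le]
        positivity
      · exact ENNReal.ofReal_ne_top
    rw [hrw]
    exact hGvol.smul_measure (by simp [Real.pi_pos])
  have hGmem : MemLp G 2 (AddCircle.haarAddCircle (T := 2 * Real.pi)) :=
    (memLp_two_iff_integrable_sq_norm hG_meas.aestronglyMeasurable).mpr hGhaar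
  -- Fourier coefficients vanish
  have hcoeff : ∀ n : ℤ, fourierCoeff G n = 0 := by
    intro n
    have hkt := key_transfer n f
    rw [hint n] at hkt
    have hcpi : ((cpi / 2 : ℝ) : ℂ) ≠ 0 := by
      simp only [ne_eq, Complex.ofReal_eq_zero]
      exact (div_pos cpi_pos two_pos).ne'
    have hzero : (∫ θ in Ioo (-Real.pi) Real.pi,
        (fourier (T := 2 * Real.pi) (-n) ((θ : ℝ) : AddCircle (2 * Real.pi))) *
          ((1 - I * tn θ) * f (tn θ))) = 0 := by
      rcases mul_eq_zero.mp hkt.symm with h | h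
      · exact absurd h hcpi
      · exact h
    rw [fourierCoeff_eq_intervalIntegral G n (-Real.pi)]
    rw [show -Real.pi + 2 * Real.pi = Real.pi by ring]
    rw [intervalIntegral.integral_of_le (by linarith [Real.pi_pos])]
    have : (∫ θ in Ioc (-Real.pi) Real.pi,
        (fourier (T := 2 * Real.pi) (-n) ((θ : ℝ) : AddCircle (2 * Real.pi))) •
          G ((θ : ℝ) : AddCircle (2 * Real.pi))) = 0 := by
      rw [show (∫ θ in Ioc (-Real.pi) Real.pi,
          (fourier (T := 2 * Real.pi) (-n) ((θ : ℝ) : AddCircle (2 * Real.pi))) •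
            G ((θ : ℝ) : AddCircle (2 * Real.pi))) = ∫ θ in Ioc (-Real.pi) Real.pi,
          (fourier (T := 2 * Real.pi) (-n) ((θ : ℝ) : AddCircle (2 * Real.pi))) * hfun θ from
        setIntegral_congr_fun measurableSet_Ioc fun θ hθ => by
          rw [smul_eq_mul, hK1 θ hθ]]
      rw [integral_Ioc_eq_integral_Ioo]
      exact hzero
    rw [this, smul_zero]
  -- conclude G = 0 a.e.
  have hG0 : G =ᵐ[AddCircle.haarAddCircle (T := 2 * Real.pi)] 0 := by
    have hcoeff' : ∀ n : ℤ,
        fourierCoeff ((MemLp.toLp G hGmem : Lp ℂ 2 (AddCircle.haarAddCircle (T := 2 * Real.pi))) :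
          AddCircle (2 * Real.pi) → ℂ) n = 0 := by
      intro n
      rw [← hcoeff n]
      exact integral_congr_ae (by
        filter_upwards [hGmem.coeFn_toLp] with x hx
        rw [hx])
    have hGL0 : MemLp.toLp G hGmem = 0 := by
      apply fourierBasis.repr.map_eq_zero_iff.mp
      ext n
      rw [fourierBasis_repr]
      simp [hcoeff' n]
    refine (hGmem.coeFn_toLp.symm.trans ?_)
    rw [hGL0]
    exact Lp.coeFn_zero ℂ 2 _
  -- pull back to ℝ
  have hGvol0 : ∀ᵐ x ∂(volume : Measure (AddCircle (2 * Real.pi))), G x = 0 := by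
    rw [AddCircle.volume_eq_smul_haarAddCircle]
    exact Measure.ae_smul_measure hG0 _
  have hae_Ioc : ∀ᵐ θ ∂(volume.restrict (Ioc (-Real.pi) Real.pi)),
      G ((θ : ℝ) : AddCircle (2 * Real.pi)) = 0 := by
    have hmap := (AddCircle.measurePreserving_mk (2 * Real.pi) (-Real.pi)).map_eq
    rw [show -Real.pi + 2 * Real.pi = Real.pi by ring] at hmap
    rw [← hmap] at hGvol0
    exact (ae_map_iff AddCircle.measurable_mk'.aemeasurable
      (hG_meas (measurableSet_singleton 0))).mp hGvol0
  have hfae : ∀ᵐ θ ∂(volume.restrict (Ioo (-Real.pi) Real.pi)), f (tn θ) = 0 := by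
    have h1 : ∀ᵐ θ ∂(volume.restrict (Ioc (-Real.pi) Real.pi)), f (tn θ) = 0 := by
      filter_upwards [hae_Ioc, ae_restrict_mem measurableSet_Ioc] with θ hθ hmem
      rw [hK1 θ hmem, hfun_def] at hθ
      rcases mul_eq_zero.mp hθ with h | h
      · exact absurd h (one_sub_ne (tn θ))
      · exact h
    exact ae_restrict_of_ae_restrict_of_subset Ioo_subset_Ioc_self h1
  -- conclude f = 0 a.e. on ℝ
  have hs_meas : MeasurableSet {ω : ℝ | f ω ≠ 0} :=
    (hfm (measurableSet_singleton 0)).compl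
  have hvol_s : volume {ω : ℝ | f ω ≠ 0} = 0 := by
    have h0 := lcov ({ω : ℝ | f ω ≠ 0}.indicator (1 : ℝ → ENNReal))
    rw [← lintegral_indicator_one hs_meas, h0]
    have h2 : (fun θ => ENNReal.ofReal (dtn θ) *
        {ω : ℝ | f ω ≠ 0}.indicator (1 : ℝ → ENNReal) (tn θ))
        =ᵐ[volume.restrict (Ioo (-Real.pi) Real.pi)] 0 := by
      filter_upwards [hfae] with θ hθ
      simp only [Set.indicator_apply, mem_setOf_eq, hθ, ne_eq, not_true_eq_false, if_false,
        mul_zero, Pi.zero_apply]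
    rw [lintegral_congr_ae h2]
    simp only [Pi.zero_apply, lintegral_const, zero_mul]
  rw [Filter.eventuallyEq_iff_exists_mem]
  refine ⟨{ω : ℝ | f ω = 0}, ?_, fun ω hω => hω⟩
  rw [mem_ae_iff]
  convert hvol_s using 2
  rfl

end PhiComplete

/-- The family `{φ_k : k ∈ ℤ}` is a complete orthonormal set in `L²(ℝ)` with the
inner product `⟨f, g⟩ = ∫ conj(f ω) * g ω dω`: each `φ_k` is square integrable,
the family is orthonormal, and any square-integrable function orthogonal to all
`φ_k` vanishes almost everywhere (completeness). -/
theorem phi_complete_orthonormal :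
    (∀ k : ℤ, MemLp (phi k) 2 (volume : Measure ℝ)) ∧
    (∀ j k : ℤ,
      (∫ ω : ℝ, (starRingEnd ℂ) (phi j ω) * phi k ω) = if j = k then 1 else 0) ∧
    (∀ f : ℝ → ℂ, MemLp f 2 (volume : Measure ℝ) →
      (∀ k : ℤ, (∫ ω : ℝ, (starRingEnd ℂ) (phi k ω) * f ω) = 0) →
      f =ᵐ[volume] 0) := by
  refine ⟨memLp_phi, phi_orthonormal, ?_⟩
  intro f hf hint
  have hae := hf.aestronglyMeasurable
  set fm : ℝ → ℂ := hae.mk f with hfm_def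
  have hsm : StronglyMeasurable fm := hae.stronglyMeasurable_mk
  have hfe : f =ᵐ[volume] fm := hae.ae_eq_mk
  have hmem_fm : MemLp fm 2 (volume : Measure ℝ) := hf.ae_eq hfe
  have hint_fm : ∀ k : ℤ, (∫ ω : ℝ, (starRingEnd ℂ) (phi k ω) * fm ω) = 0 := by
    intro k
    rw [← hint k]
    apply integral_congr_ae
    filter_upwards [hfe] with ω hω
    rw [hω]
  exact hfe.trans (phi_complete fm hsm hmem_fm hint_fm)
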